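/- Let R be the curvature tensor of (ℂP³, gₐ) given by the formula in Theorem 'curvature of CP3a'. Then the associated Ricci tensor satisfies Ric(X,Y) = 4(1 + 1/a²)·gₐ((id-P)/2 · X, Y) + 4(3a-1)/a² · gₐ((id+P)/2 · X, Y), where the trace is taken over a gₐ-orthonormal basis adapted to the eigenspaces of P (dim 2 for eigenvalue -1, dim 4 for eigenvalue +1), and the scalar curvature equals 8(a² + 6a - 1)/a². -/
import Mathlib


open scoped RealInnerProductSpace

/-- `(X ∧ Y)Z = gₐ(Y,Z)X - gₐ(X,Z)Y`. -/
noncomputable def wedge {V : Type*} [NormedAddCommGroup V] [InnerProductSpace ℝ V]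
    (X Y Z : V) : V := ⟪Y, Z⟫ • X - ⟪X, Z⟫ • Y

theorem stmt10 {V : Type*} [NormedAddCommGroup V] [InnerProductSpace ℝ V]
    [FiniteDimensional ℝ V] (hdim : Module.finrank ℝ V = 6)
    (J₁ J P : V →ₗ[ℝ] V) (a : ℝ) (ha : 0 < a)
    (hJ₁sq : J₁ ∘ₗ J₁ = -LinearMap.id)
    (hJ₁iso : ∀ x y : V, ⟪J₁ x, J₁ y⟫ = ⟪x, y⟫)
    (hJsq : J ∘ₗ J = -LinearMap.id)
    (hJiso : ∀ x y : V, ⟪J x, J y⟫ = ⟪x, y⟫)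
    (hPsq : P ∘ₗ P = LinearMap.id)
    (hPsa : ∀ x y : V, ⟪P x, y⟫ = ⟪x, P y⟫)
    (hP : P = -(J ∘ₗ J₁))
    (hJPJ₁ : J = P ∘ₗ J₁)
    (hcomm : P ∘ₗ J₁ = J₁ ∘ₗ P)
    -- a gₐ-orthonormal basis adapted to the eigenspaces of P:
    -- the first two vectors span the (-1)-eigenspace, the last four the (+1)-eigenspace
    (b : OrthonormalBasis (Fin 6) ℝ V)
    (hbm : ∀ i : Fin 6, (i : ℕ) < 2 → P (b i) = -b i)
    (hbp : ∀ i : Fin 6, 2 ≤ (i : ℕ) → P (b i) = b i)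
    (R : V → V → V → V)
    (hR : ∀ X Y Z : V, R X Y Z =
      ((a - 1) * (a + 2) / a ^ 2) • wedge X Y Z
      + (1 / a) • (wedge X Y Z + wedge (J₁ X) (J₁ Y) Z
          + (2 * ⟪X, J₁ Y⟫) • J₁ Z)
      + ((1 - a) / a ^ 2) • (wedge X Y Z + wedge (J X) (J Y) Z
          + (2 * ⟪X, J Y⟫) • J Z)
      + ((1 - a) / a) • (wedge X Y (P Z) + P (wedge X Y Z)
          - ((a + 2) / a) • P (wedge X Y (P Z)))) :
    (∀ X Y : V, (∑ i, ⟪R (b i) X Y, b i⟫) =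
        4 * (1 + 1 / a ^ 2) * ⟪(2⁻¹ : ℝ) • (X - P X), Y⟫
        + 4 * (3 * a - 1) / a ^ 2 * ⟪(2⁻¹ : ℝ) • (X + P X), Y⟫) ∧
    (∑ j, ∑ i, ⟪R (b i) (b j) (b j), b i⟫) = 8 * (a ^ 2 + 6 * a - 1) / a ^ 2 := by
  have ha0 : a ≠ 0 := ne_of_gt ha
  -- basic facts
  have hb1 : ∀ i : Fin 6, ⟪b i, b i⟫ = (1 : ℝ) := fun i => by
    have h := b.orthonormal.1 i
    rw [real_inner_self_eq_norm_mul_norm, h, one_mul]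
  have pars : ∀ x y : V, (∑ i, ⟪x, b i⟫ * ⟪y, b i⟫) = ⟪x, y⟫ := by
    intro x y
    calc (∑ i, ⟪x, b i⟫ * ⟪y, b i⟫) = ∑ i, ⟪x, b i⟫ * ⟪b i, y⟫ :=
          Finset.sum_congr rfl (fun i _ => by rw [real_inner_comm y])
      _ = ⟪x, y⟫ := b.sum_inner_mul_inner x y
  have skew : ∀ (T : V →ₗ[ℝ] V), T ∘ₗ T = -LinearMap.id →
      (∀ x y : V, ⟪T x, T y⟫ = ⟪x, y⟫) → ∀ x y : V, ⟪T x, y⟫ = -⟪x, T y⟫ := by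
    intro T hsq hiso x y
    have h2 : T (T y) = -y := by
      have := congrArg (fun f : V →ₗ[ℝ] V => f y) hsq
      simpa using this
    have h := hiso x (T y)
    rw [h2, inner_neg_right] at h
    linarith
  have skew1 := skew J₁ hJ₁sq hJ₁iso
  have skew2 := skew J hJsq hJiso
  have hPP : ∀ x : V, P (P x) = x := by
    intro x
    have := congrArg (fun f : V →ₗ[ℝ] V => f x) hPsq
    simpa using this
  -- trace of P
  have trP : (∑ i, ⟪P (b i), b i⟫) = (2 : ℝ) := by
    rw [Fin.sum_univ_six]
    rw [hbm 0 (by decide), hbm 1 (by decide), hbp 2 (by decide),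
      hbp 3 (by decide), hbp 4 (by decide), hbp 5 (by decide)]
    simp only [inner_neg_left, hb1]
    norm_num
  -- elementary trace lemmas
  have W1 : ∀ Z W : V, (∑ i, ⟪wedge (b i) Z W, b i⟫) = 5 * ⟪Z, W⟫ := by
    intro Z W
    have hpt : ∀ i : Fin 6, ⟪wedge (b i) Z W, b i⟫ = ⟪Z, W⟫ - ⟪W, b i⟫ * ⟪Z, b i⟫ := by
      intro i
      simp only [wedge, inner_sub_left, real_inner_smul_left, hb1, mul_one,
        real_inner_comm W (b i)]
    rw [Finset.sum_congr rfl (fun i _ => hpt i), Finset.sum_sub_distrib, pars,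
      Finset.sum_const, Finset.card_univ, Fintype.card_fin, nsmul_eq_mul,
      real_inner_comm W Z]
    push_cast
    ring
  have W2 : ∀ (T : V →ₗ[ℝ] V), T ∘ₗ T = -LinearMap.id →
      (∀ x y : V, ⟪T x, T y⟫ = ⟪x, y⟫) →
      ∀ Z W : V, (∑ i, ⟪wedge (T (b i)) (T Z) W, b i⟫) = ⟪Z, W⟫ := by
    intro T hsq hiso Z W
    have hskew := skew T hsq hiso
    have hpt : ∀ i : Fin 6, ⟪wedge (T (b i)) (T Z) W, b i⟫
        = ⟪T W, b i⟫ * ⟪T Z, b i⟫ := by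
      intro i
      simp only [wedge, inner_sub_left, real_inner_smul_left]
      have h1 : ⟪T (b i), b i⟫ = 0 := by
        have := hskew (b i) (b i)
        have h2 : ⟪b i, T (b i)⟫ = ⟪T (b i), b i⟫ := real_inner_comm _ _
        linarith [this, h2.ge, h2.le]
      have h3 : ⟪T (b i), W⟫ = -⟪T W, b i⟫ := by
        rw [hskew (b i) W, real_inner_comm (b i) (T W)]
      rw [h1, h3]
      ring
    rw [Finset.sum_congr rfl (fun i _ => hpt i), pars, hiso]
    exact real_inner_comm Z W
  have W4 : ∀ Z W : V, (∑ i, ⟪P (wedge (b i) Z W), b i⟫)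
      = 2 * ⟪Z, W⟫ - ⟪P Z, W⟫ := by
    intro Z W
    have hpt : ∀ i : Fin 6, ⟪P (wedge (b i) Z W), b i⟫
        = ⟪Z, W⟫ * ⟪P (b i), b i⟫ - ⟪W, b i⟫ * ⟪P Z, b i⟫ := by
      intro i
      simp only [wedge, map_sub, map_smul, inner_sub_left, real_inner_smul_left]
      rw [real_inner_comm W (b i)]
    rw [Finset.sum_congr rfl (fun i _ => hpt i), Finset.sum_sub_distrib,
      ← Finset.mul_sum, trP, pars, real_inner_comm (P Z) W]
    ring
  -- the key Ricci computation
  have key : ∀ X Y : V, (∑ i, ⟪R (b i) X Y, b i⟫)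
      = (2 + 6 / a) * ⟪X, Y⟫ + ((-2 * a ^ 2 + 6 * a - 4) / a ^ 2) * ⟪P X, Y⟫ := by
    intro X Y
    have hXY : ⟪X, P Y⟫ = ⟪P X, Y⟫ := (hPsa X Y).symm
    have hPXPY : ⟪P X, P Y⟫ = ⟪X, Y⟫ := by rw [hPsa X (P Y), hPP]
    have SC1 : (∑ i, ⟪b i, J₁ X⟫ * ⟪J₁ Y, b i⟫) = ⟪X, Y⟫ := by
      have hpt : ∀ i : Fin 6, ⟪b i, J₁ X⟫ * ⟪J₁ Y, b i⟫
          = ⟪J₁ X, b i⟫ * ⟪J₁ Y, b i⟫ := fun i => by rw [real_inner_comm (J₁ X) (b i)]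
      rw [Finset.sum_congr rfl (fun i _ => hpt i), pars, hJ₁iso]
    have SC2 : (∑ i, ⟪b i, J X⟫ * ⟪J Y, b i⟫) = ⟪X, Y⟫ := by
      have hpt : ∀ i : Fin 6, ⟪b i, J X⟫ * ⟪J Y, b i⟫
          = ⟪J X, b i⟫ * ⟪J Y, b i⟫ := fun i => by rw [real_inner_comm (J X) (b i)]
      rw [Finset.sum_congr rfl (fun i _ => hpt i), pars, hJiso]
    have hpt : ∀ i : Fin 6, ⟪R (b i) X Y, b i⟫ =
        ((a - 1) * (a + 2) / a ^ 2) * ⟪wedge (b i) X Y, b i⟫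
        + (1 / a) * (⟪wedge (b i) X Y, b i⟫ + ⟪wedge (J₁ (b i)) (J₁ X) Y, b i⟫
            + 2 * (⟪b i, J₁ X⟫ * ⟪J₁ Y, b i⟫))
        + ((1 - a) / a ^ 2) * (⟪wedge (b i) X Y, b i⟫ + ⟪wedge (J (b i)) (J X) Y, b i⟫
            + 2 * (⟪b i, J X⟫ * ⟪J Y, b i⟫))
        + ((1 - a) / a) * (⟪wedge (b i) X (P Y), b i⟫ + ⟪P (wedge (b i) X Y), b i⟫
            - ((a + 2) / a) * ⟪P (wedge (b i) X (P Y)), b i⟫) := by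
      intro i
      rw [hR]
      simp only [inner_add_left, inner_sub_left, real_inner_smul_left]
      ring
    rw [Finset.sum_congr rfl (fun i _ => hpt i)]
    simp only [Finset.sum_add_distrib, Finset.sum_sub_distrib, ← Finset.mul_sum]
    rw [W1 X Y, W2 J₁ hJ₁sq hJ₁iso X Y, W2 J hJsq hJiso X Y, SC1, SC2,
      W1 X (P Y), W4 X Y, W4 X (P Y), hXY, hPXPY]
    field_simp
    ring
  constructor
  · intro X Y
    rw [key X Y]
    simp only [real_inner_smul_left, inner_sub_left, inner_add_left]
    field_simp
    ring
  · have hpt : ∀ j : Fin 6, (∑ i, ⟪R (b i) (b j) (b j), b i⟫)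
        = (2 + 6 / a) * ⟪b j, b j⟫
          + ((-2 * a ^ 2 + 6 * a - 4) / a ^ 2) * ⟪P (b j), b j⟫ :=
      fun j => key (b j) (b j)
    rw [Finset.sum_congr rfl (fun j _ => hpt j), Finset.sum_add_distrib,
      ← Finset.mul_sum, ← Finset.mul_sum, trP]
    simp only [hb1]
    rw [Finset.sum_const, Finset.card_univ, Fintype.card_fin, nsmul_eq_mul]
    field_simp
    ring
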